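/- arXiv:2302.13502 — 2 statements merged into one kernel-verified Lean document; each statement's English description precedes it below -/
import Mathlib

section
/- Let x ∈ ℂ with x ≠ 0 not be an eigenvalue of Q₁, and let w ∈ ℂ satisfy w² = x. Let P be the 2N×2N diagonal matrix whose first N diagonal entries are (1+d_i^a)^{1/2} for i ≤ r and 1 for r < i ≤ N, and whose last N diagonal entries are (1+d_j^b)^{1/2} for j ≤ s and 1 for j > s. Then P·H(x)·P = [[0, w·Ŷ],[w·Ŷᴴ, 0]], and the determinant factorization det(P·H(x)·P − x·I_{2N}) = det(P)²·det(H(x) − x·I_{2N})·det(𝒟)·det(𝒟⁻¹ + x·𝐔ᴴ·G(x)·𝐔) holds. -/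
open Matrix

noncomputable section

/-- Spiked diagonal entries: `â_k = a_k (1 + d_k)` for `k < r` (0-indexed) and
`â_k = a_k` otherwise. -/
def hatEntries (N r : ℕ) (a d : Fin N → ℝ) : Fin N → ℝ :=
  fun k => if (k : ℕ) < r then a k * (1 + d k) else a k

/-- The diagonal matrix `A^{1/2}` with entries `√(a_i)`. -/
def sqrtDiag (N : ℕ) (a : Fin N → ℝ) : Matrix (Fin N) (Fin N) ℂ :=
  Matrix.diagonal fun i => ((Real.sqrt (a i) : ℝ) : ℂ)

/-- `Y = A^{1/2} U B^{1/2}`. -/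
def Ymat (N : ℕ) (a b : Fin N → ℝ) (U : Matrix (Fin N) (Fin N) ℂ) :
    Matrix (Fin N) (Fin N) ℂ :=
  sqrtDiag N a * U * sqrtDiag N b

/-- The linearization `H(x) = [[0, w·Y],[w·Yᴴ, 0]]`, where `w² = x`. -/
def Hlin (N : ℕ) (Y : Matrix (Fin N) (Fin N) ℂ) (w : ℂ) :
    Matrix (Fin N ⊕ Fin N) (Fin N ⊕ Fin N) ℂ :=
  Matrix.fromBlocks 0 (w • Y) (w • Yᴴ) 0

/-- The `2N × (r+s)` matrix `𝐔` whose columns are `e₁,…,e_r` and `e_{N+1},…,e_{N+s}`. -/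
def Umat (N r s : ℕ) : Matrix (Fin N ⊕ Fin N) (Fin r ⊕ Fin s) ℂ :=
  Matrix.fromBlocks (fun i i' => if (i : ℕ) = (i' : ℕ) then 1 else 0) 0 0
    (fun j j' => if (j : ℕ) = (j' : ℕ) then 1 else 0)

/-- The `(r+s) × (r+s)` diagonal matrix `𝒟` with entries `d_i^a/(1+d_i^a)` and
`d_j^b/(1+d_j^b)`. -/
def Dmat (N r s : ℕ) (hr : r ≤ N) (hs : s ≤ N) (da db : Fin N → ℝ) :
    Matrix (Fin r ⊕ Fin s) (Fin r ⊕ Fin s) ℂ :=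
  Matrix.diagonal (Sum.elim
    (fun i : Fin r =>
      ((da (Fin.castLE hr i) / (1 + da (Fin.castLE hr i)) : ℝ) : ℂ))
    (fun j : Fin s =>
      ((db (Fin.castLE hs j) / (1 + db (Fin.castLE hs j)) : ℝ) : ℂ)))

/-- The `2N × 2N` diagonal matrix `P` with entries `(1+d_i^a)^{1/2}` (`i < r`), `1`
(`r ≤ i < N`), `(1+d_j^b)^{1/2}` (`j < s`), `1` (`s ≤ j < N`). -/
def Pmat (N r s : ℕ) (da db : Fin N → ℝ) :
    Matrix (Fin N ⊕ Fin N) (Fin N ⊕ Fin N) ℂ :=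
  Matrix.diagonal (Sum.elim
    (fun i : Fin N =>
      ((Real.sqrt (1 + if (i : ℕ) < r then da i else 0) : ℝ) : ℂ))
    (fun j : Fin N =>
      ((Real.sqrt (1 + if (j : ℕ) < s then db j else 0) : ℝ) : ℂ)))

/-- The `(r+s) × (r+s)` diagonal matrix `(I − 𝒟)^{1/2}` with entries `(1+d_i^a)^{-1/2}`
and `(1+d_j^b)^{-1/2}`. -/
def Emat (N r s : ℕ) (hr : r ≤ N) (hs : s ≤ N) (da db : Fin N → ℝ) :
    Matrix (Fin r ⊕ Fin s) (Fin r ⊕ Fin s) ℂ :=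
  Matrix.diagonal (Sum.elim
    (fun i : Fin r => (((Real.sqrt (1 + da (Fin.castLE hr i)))⁻¹ : ℝ) : ℂ))
    (fun j : Fin s => (((Real.sqrt (1 + db (Fin.castLE hs j)))⁻¹ : ℝ) : ℂ)))

-- ### auxiliary

lemma block_sum {N m : ℕ} (hm : m ≤ N) (f : Fin N → ℂ) (i j : Fin N) :
    (∑ k : Fin m, (if (i : ℕ) = (k : ℕ) then (1:ℂ) else 0) * f (Fin.castLE hm k) *
      star (if (j : ℕ) = (k : ℕ) then (1:ℂ) else 0)) =
    if i = j ∧ (i : ℕ) < m then f i else 0 := by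
  by_cases him : (i : ℕ) < m
  · rw [Finset.sum_eq_single (⟨(i : ℕ), him⟩ : Fin m)]
    · by_cases hij : i = j
      · subst hij
        have : Fin.castLE hm (⟨(i:ℕ), him⟩ : Fin m) = i := by ext; rfl
        simp [this, him]
      · have hij' : (j : ℕ) ≠ (i : ℕ) := fun h => hij (Fin.ext h.symm)
        simp [hij, hij']
    · intro k _ hk
      have : (i : ℕ) ≠ (k : ℕ) := fun h => hk (by ext; exact h.symm)
      simp [this]
    · simp
  · rw [Finset.sum_eq_zero]
    · simp [him]
    · intro k _
      have : (i : ℕ) ≠ (k : ℕ) := by omega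
      simp [this]

def pEnt (N r : ℕ) (d : Fin N → ℝ) : Fin N → ℂ :=
  fun i => ((Real.sqrt (1 + if (i : ℕ) < r then d i else 0) : ℝ) : ℂ)

lemma pEnt_ne_zero {N r : ℕ} {d : Fin N → ℝ} (hd : ∀ i : Fin N, (i : ℕ) < r → 0 < d i)
    (i : Fin N) : pEnt N r d i ≠ 0 := by
  have hpos : 0 < 1 + (if (i : ℕ) < r then d i else 0) := by
    split
    · have := hd i ‹_›; linarith
    · norm_num
  simp [pEnt, Complex.ofReal_eq_zero, Real.sqrt_eq_zero', not_le, hpos]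

lemma pEnt_mul_sqrt {N r : ℕ} {a d : Fin N → ℝ} (ha : ∀ i, 0 < a i) (i : Fin N) :
    pEnt N r d i * ((Real.sqrt (a i) : ℝ) : ℂ) =
      ((Real.sqrt (hatEntries N r a d i) : ℝ) : ℂ) := by
  rw [pEnt, hatEntries]
  split
  · rw [Real.sqrt_mul (ha i).le]
    push_cast
    ring
  · simp

lemma diag_mul_sqrtDiag {N r : ℕ} {a d : Fin N → ℝ} (ha : ∀ i, 0 < a i) :
    Matrix.diagonal (pEnt N r d) * sqrtDiag N a = sqrtDiag N (hatEntries N r a d) := by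
  rw [sqrtDiag, sqrtDiag, diagonal_mul_diagonal]
  exact congrArg Matrix.diagonal (funext fun i => pEnt_mul_sqrt ha i)

lemma sqrtDiag_mul_diag {N r : ℕ} {a d : Fin N → ℝ} (ha : ∀ i, 0 < a i) :
    sqrtDiag N a * Matrix.diagonal (pEnt N r d) = sqrtDiag N (hatEntries N r a d) := by
  rw [sqrtDiag, sqrtDiag, diagonal_mul_diagonal]
  exact congrArg Matrix.diagonal (funext fun i => (mul_comm _ _).trans (pEnt_mul_sqrt ha i))

lemma diag_pEnt_conjTranspose {N r : ℕ} (d : Fin N → ℝ) :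
    (Matrix.diagonal (pEnt N r d))ᴴ = Matrix.diagonal (pEnt N r d) := by
  rw [diagonal_conjTranspose]
  exact congrArg Matrix.diagonal (funext fun i => by
    simp [pEnt, Pi.star_apply, Complex.star_def, Complex.conj_ofReal])

lemma Pmat_eq (N r s : ℕ) (da db : Fin N → ℝ) :
    Pmat N r s da db =
      fromBlocks (Matrix.diagonal (pEnt N r da)) 0 0 (Matrix.diagonal (pEnt N s db)) := by
  rw [Pmat, ← fromBlocks_diagonal]
  rfl

lemma part1 (N r s : ℕ) (a b da db : Fin N → ℝ) (ha : ∀ i, 0 < a i) (hb : ∀ i, 0 < b i)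
    (U : Matrix (Fin N) (Fin N) ℂ) (w : ℂ) :
    Pmat N r s da db * Hlin N (Ymat N a b U) w * Pmat N r s da db =
      Hlin N (Ymat N (hatEntries N r a da) (hatEntries N s b db) U) w := by
  have hY : Matrix.diagonal (pEnt N r da) * (Ymat N a b U * Matrix.diagonal (pEnt N s db))
      = Ymat N (hatEntries N r a da) (hatEntries N s b db) U := by
    rw [Ymat, Ymat, ← diag_mul_sqrtDiag ha (d := da), ← sqrtDiag_mul_diag hb (d := db)]
    simp only [Matrix.mul_assoc]
  have hYH : Matrix.diagonal (pEnt N s db) *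
        ((Ymat N a b U)ᴴ * Matrix.diagonal (pEnt N r da))
      = (Ymat N (hatEntries N r a da) (hatEntries N s b db) U)ᴴ := by
    rw [← hY, conjTranspose_mul, conjTranspose_mul, diag_pEnt_conjTranspose,
      diag_pEnt_conjTranspose, Matrix.mul_assoc]
  rw [Pmat_eq, Hlin, Hlin, fromBlocks_multiply, fromBlocks_multiply]
  simp only [Matrix.mul_zero, Matrix.zero_mul, add_zero, zero_add, Matrix.mul_assoc,
    smul_mul_assoc, mul_smul_comm, smul_zero]
  rw [← hYH, ← hY]

def pInvEnt (N r : ℕ) (d : Fin N → ℝ) : Fin N → ℂ := fun i => (pEnt N r d i)⁻¹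

lemma P_mul_Pinv (N r s : ℕ) (da db : Fin N → ℝ)
    (hda : ∀ i : Fin N, (i : ℕ) < r → 0 < da i)
    (hdb : ∀ j : Fin N, (j : ℕ) < s → 0 < db j) :
    Pmat N r s da db *
      Matrix.diagonal (Sum.elim (pInvEnt N r da) (pInvEnt N s db)) = 1 := by
  have : Pmat N r s da db = Matrix.diagonal (Sum.elim (pEnt N r da) (pEnt N s db)) := rfl
  rw [this, diagonal_mul_diagonal, ← diagonal_one]
  refine congrArg Matrix.diagonal (funext fun i => ?_)
  cases i with
  | inl i => exact mul_inv_cancel₀ (pEnt_ne_zero hda i)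
  | inr j => exact mul_inv_cancel₀ (pEnt_ne_zero hdb j)

lemma Pinv_mul_P (N r s : ℕ) (da db : Fin N → ℝ)
    (hda : ∀ i : Fin N, (i : ℕ) < r → 0 < da i)
    (hdb : ∀ j : Fin N, (j : ℕ) < s → 0 < db j) :
    Matrix.diagonal (Sum.elim (pInvEnt N r da) (pInvEnt N s db)) *
      Pmat N r s da db = 1 := by
  have : Pmat N r s da db = Matrix.diagonal (Sum.elim (pEnt N r da) (pEnt N s db)) := rfl
  rw [this, diagonal_mul_diagonal, ← diagonal_one]
  refine congrArg Matrix.diagonal (funext fun i => ?_)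
  cases i with
  | inl i => exact inv_mul_cancel₀ (pEnt_ne_zero hda i)
  | inr j => exact inv_mul_cancel₀ (pEnt_ne_zero hdb j)

lemma one_sub_inv_sq {N m : ℕ} {d : Fin N → ℝ} (hd : ∀ i : Fin N, (i : ℕ) < m → 0 < d i)
    (i : Fin N) :
    (if (i : ℕ) < m then ((d i / (1 + d i) : ℝ) : ℂ) else 0)
      = 1 - pInvEnt N m d i * pInvEnt N m d i := by
  rw [pInvEnt, pEnt]
  split
  · rename_i h
    have hd1 : (0:ℝ) < 1 + d i := by have := hd i h; linarith
    have key : d i / (1 + d i) = 1 - (Real.sqrt (1 + d i))⁻¹ * (Real.sqrt (1 + d i))⁻¹ := by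
      rw [← mul_inv, Real.mul_self_sqrt hd1.le]
      field_simp
      ring
    rw [key]
    push_cast
    ring
  · simp

lemma UDU (N r s : ℕ) (hr : r ≤ N) (hs : s ≤ N) (da db : Fin N → ℝ)
    (hda : ∀ i : Fin N, (i : ℕ) < r → 0 < da i)
    (hdb : ∀ j : Fin N, (j : ℕ) < s → 0 < db j) :
    Umat N r s * Dmat N r s hr hs da db * (Umat N r s)ᴴ =
      1 - Matrix.diagonal (Sum.elim
        (fun i => pInvEnt N r da i * pInvEnt N r da i)
        (fun j => pInvEnt N s db j * pInvEnt N s db j)) := by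
  have hblock : ∀ (m : ℕ) (hm : m ≤ N) (d : Fin N → ℝ)
      (hd : ∀ i : Fin N, (i : ℕ) < m → 0 < d i),
      (Matrix.of fun (i : Fin N) (i' : Fin m) =>
          if (i : ℕ) = (i' : ℕ) then (1:ℂ) else 0) *
        Matrix.diagonal (fun k : Fin m =>
          ((d (Fin.castLE hm k) / (1 + d (Fin.castLE hm k)) : ℝ) : ℂ)) *
        (Matrix.of fun (i : Fin N) (i' : Fin m) =>
          if (i : ℕ) = (i' : ℕ) then (1:ℂ) else 0)ᴴ
      = 1 - Matrix.diagonal (fun i => pInvEnt N m d i * pInvEnt N m d i) := by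
    intro m hm d hd
    ext i j
    rw [Matrix.mul_apply]
    simp only [Matrix.mul_diagonal, conjTranspose_apply, Matrix.of_apply]
    rw [block_sum hm (fun i => ((d i / (1 + d i) : ℝ) : ℂ)) i j]
    rw [Matrix.sub_apply, Matrix.one_apply, Matrix.diagonal_apply]
    by_cases hij : i = j
    · subst hij
      simpa using one_sub_inv_sq hd i
    · simp [hij]
  have hUo : Umat N r s = fromBlocks
      (Matrix.of fun (i : Fin N) (i' : Fin r) => if (i : ℕ) = (i' : ℕ) then (1:ℂ) else 0) 0 0
      (Matrix.of fun (j : Fin N) (j' : Fin s) => if (j : ℕ) = (j' : ℕ) then (1:ℂ) else 0) := rfl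
  rw [hUo, Dmat, ← fromBlocks_diagonal, fromBlocks_conjTranspose,
    fromBlocks_multiply, fromBlocks_multiply]
  simp only [Matrix.mul_zero, Matrix.zero_mul, add_zero, zero_add,
    conjTranspose_zero]
  rw [hblock r hr da hda, hblock s hs db hdb, ← fromBlocks_diagonal,
    ← fromBlocks_one]
  ext i j
  cases i <;> cases j <;> simp [fromBlocks]

lemma detM_ne_zero (N : ℕ) (Y : Matrix (Fin N) (Fin N) ℂ) (x w : ℂ) (hx : x ≠ 0)
    (hw : w ^ 2 = x)
    (hev : ∀ v : Fin N → ℂ, (Y * Yᴴ) *ᵥ v = x • v → v = 0) :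
    (Hlin N Y w - x • (1 : Matrix (Fin N ⊕ Fin N) (Fin N ⊕ Fin N) ℂ)).det ≠ 0 := by
  have hM : Hlin N Y w - x • (1 : Matrix (Fin N ⊕ Fin N) (Fin N ⊕ Fin N) ℂ) =
      fromBlocks (-(x • 1)) (w • Y) (w • Yᴴ) (-(x • 1)) := by
    rw [Hlin, ← fromBlocks_one, fromBlocks_smul, smul_zero, sub_eq_add_neg,
      fromBlocks_neg, fromBlocks_add]
    simp
  letI : Invertible (-(x • (1 : Matrix (Fin N) (Fin N) ℂ))) :=
    ⟨-(x⁻¹ • 1), by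
        rw [neg_mul_neg, Matrix.smul_mul, Matrix.one_mul, smul_smul,
          inv_mul_cancel₀ hx, one_smul], by
        rw [neg_mul_neg, Matrix.smul_mul, Matrix.one_mul, smul_smul,
          mul_inv_cancel₀ hx, one_smul]⟩
  rw [hM, det_fromBlocks₂₂]
  have hInv : ⅟(-(x • (1 : Matrix (Fin N) (Fin N) ℂ))) = -(x⁻¹ • 1) := rfl
  rw [hInv]
  have hww : w * (x⁻¹ * w) = 1 := by
    have hw2 : w * w = x := by rw [← sq]; exact hw
    calc w * (x⁻¹ * w) = (w * w) * x⁻¹ := by ring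
      _ = 1 := by rw [hw2, mul_inv_cancel₀ hx]
  have hschur : -(x • (1 : Matrix (Fin N) (Fin N) ℂ)) - (w • Y) * -(x⁻¹ • 1) * (w • Yᴴ)
      = Y * Yᴴ - x • 1 := by
    rw [Matrix.mul_neg, Matrix.neg_mul, sub_neg_eq_add]
    simp only [Matrix.smul_mul, Matrix.mul_smul, Matrix.one_mul, Matrix.mul_one,
      smul_smul]
    rw [hww, one_smul]
    abel
  rw [hschur]
  have hd1 : (-(x • (1 : Matrix (Fin N) (Fin N) ℂ))).det ≠ 0 := by
    rw [← neg_smul, det_smul, det_one, mul_one]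
    exact pow_ne_zero _ (neg_ne_zero.mpr hx)
  have hd2 : (Y * Yᴴ - x • (1 : Matrix (Fin N) (Fin N) ℂ)).det ≠ 0 := by
    intro h
    obtain ⟨v, hv0, hv⟩ := Matrix.exists_mulVec_eq_zero_iff.mpr h
    apply hv0
    apply hev
    rw [sub_mulVec, smul_mulVec, one_mulVec] at hv
    exact sub_eq_zero.mp hv
  exact mul_ne_zero hd1 hd2

/-- `P·H(x)·P = [[0, w·Ŷ],[w·Ŷᴴ, 0]]` and
`det(P·H(x)·P − x·I) = det(P)²·det(H(x) − x·I)·det(𝒟)·det(𝒟⁻¹ + x·𝐔ᴴ·G(x)·𝐔)`. -/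
theorem spiked_determinant_factorization (N r s : ℕ)
    (hN : 0 < N) (hrpos : 0 < r) (hspos : 0 < s) (hr : r ≤ N) (hs : s ≤ N)
    (a b da db : Fin N → ℝ)
    (ha : ∀ i, 0 < a i) (hb : ∀ i, 0 < b i)
    (hda : ∀ i : Fin N, (i : ℕ) < r → 0 < da i)
    (hdb : ∀ j : Fin N, (j : ℕ) < s → 0 < db j)
    (U : Matrix (Fin N) (Fin N) ℂ) (hU : U ∈ Matrix.unitaryGroup (Fin N) ℂ)
    (x w : ℂ) (hx : x ≠ 0) (hw : w ^ 2 = x)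
    (hev : ∀ v : Fin N → ℂ,
      (Ymat N a b U * (Ymat N a b U)ᴴ) *ᵥ v = x • v → v = 0) :
    Pmat N r s da db * Hlin N (Ymat N a b U) w * Pmat N r s da db =
      Hlin N (Ymat N (hatEntries N r a da) (hatEntries N s b db) U) w ∧
    (Pmat N r s da db * Hlin N (Ymat N a b U) w * Pmat N r s da db -
        x • (1 : Matrix (Fin N ⊕ Fin N) (Fin N ⊕ Fin N) ℂ)).det =
      (Pmat N r s da db).det ^ 2 *
        (Hlin N (Ymat N a b U) w -
          x • (1 : Matrix (Fin N ⊕ Fin N) (Fin N ⊕ Fin N) ℂ)).det *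
        (Dmat N r s hr hs da db).det *
        ((Dmat N r s hr hs da db)⁻¹ +
          x • ((Umat N r s)ᴴ *
            (Hlin N (Ymat N a b U) w -
              x • (1 : Matrix (Fin N ⊕ Fin N) (Fin N ⊕ Fin N) ℂ))⁻¹ *
            Umat N r s)).det := by

  refine ⟨part1 N r s a b da db ha hb U w, ?_⟩
  have hP1 := P_mul_Pinv N r s da db hda hdb
  have hP2 := Pinv_mul_P N r s da db hda hdb
  have hdetM := detM_ne_zero N (Ymat N a b U) x w hx hw hev
  have hMM : (Hlin N (Ymat N a b U) w -
        x • (1 : Matrix (Fin N ⊕ Fin N) (Fin N ⊕ Fin N) ℂ)) *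
      (Hlin N (Ymat N a b U) w -
        x • (1 : Matrix (Fin N ⊕ Fin N) (Fin N ⊕ Fin N) ℂ))⁻¹ = 1 :=
    mul_nonsing_inv _ (isUnit_iff_ne_zero.mpr hdetM)
  have hdetD : (Dmat N r s hr hs da db).det ≠ 0 := by
    rw [Dmat, det_diagonal, Finset.prod_ne_zero_iff]
    intro k _
    cases k with
    | inl i =>
      have h1 : 0 < da (Fin.castLE hr i) := hda (Fin.castLE hr i) i.isLt
      simp only [Sum.elim_inl, ne_eq, Complex.ofReal_eq_zero]
      positivity
    | inr j =>
      have h1 : 0 < db (Fin.castLE hs j) := hdb (Fin.castLE hs j) j.isLt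
      simp only [Sum.elim_inr, ne_eq, Complex.ofReal_eq_zero]
      positivity
  have hDD : Dmat N r s hr hs da db * (Dmat N r s hr hs da db)⁻¹ = 1 :=
    mul_nonsing_inv _ (isUnit_iff_ne_zero.mpr hdetD)
  -- step 1: factorization of the matrix
  have hfact : Pmat N r s da db * Hlin N (Ymat N a b U) w * Pmat N r s da db -
        x • (1 : Matrix (Fin N ⊕ Fin N) (Fin N ⊕ Fin N) ℂ)
      = Pmat N r s da db *
          ((Hlin N (Ymat N a b U) w - x • 1) *
            (1 + x • ((Hlin N (Ymat N a b U) w - x • 1)⁻¹ *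
              (Umat N r s * (Dmat N r s hr hs da db * (Umat N r s)ᴴ))))) *
          Pmat N r s da db := by
    have e2 : (Hlin N (Ymat N a b U) w - x • 1) *
          (1 + x • ((Hlin N (Ymat N a b U) w - x • 1)⁻¹ *
            (Umat N r s * (Dmat N r s hr hs da db * (Umat N r s)ᴴ))))
        = (Hlin N (Ymat N a b U) w - x • 1) +
            x • (Umat N r s * Dmat N r s hr hs da db * (Umat N r s)ᴴ) := by
      rw [Matrix.mul_add, Matrix.mul_one, Matrix.mul_smul, ← Matrix.mul_assoc, hMM,
        Matrix.one_mul, Matrix.mul_assoc]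
    have hQQ : Matrix.diagonal (Sum.elim
          (fun i => pInvEnt N r da i * pInvEnt N r da i)
          (fun j => pInvEnt N s db j * pInvEnt N s db j))
        = Matrix.diagonal (Sum.elim (pInvEnt N r da) (pInvEnt N s db)) *
            Matrix.diagonal (Sum.elim (pInvEnt N r da) (pInvEnt N s db)) := by
      rw [diagonal_mul_diagonal]
      exact congrArg Matrix.diagonal (funext fun i => by cases i <;> rfl)
    rw [e2, UDU N r s hr hs da db hda hdb, hQQ]
    simp only [Matrix.mul_add, Matrix.add_mul, Matrix.mul_sub, Matrix.sub_mul,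
      Matrix.mul_one, Matrix.one_mul, smul_sub, Matrix.mul_smul, Matrix.smul_mul,
      Matrix.mul_assoc, hP1, hP2]
    abel
  rw [hfact, det_mul, det_mul, det_mul]
  -- step 2: Weinstein–Aronszajn
  have h1 : (1 : Matrix (Fin N ⊕ Fin N) (Fin N ⊕ Fin N) ℂ) +
        x • ((Hlin N (Ymat N a b U) w - x • 1)⁻¹ *
          (Umat N r s * (Dmat N r s hr hs da db * (Umat N r s)ᴴ)))
      = 1 + (x • ((Hlin N (Ymat N a b U) w - x • 1)⁻¹ * Umat N r s)) *
          (Dmat N r s hr hs da db * (Umat N r s)ᴴ) := by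
    rw [Matrix.smul_mul]
    simp only [Matrix.mul_assoc]
  have h2 : (1 : Matrix (Fin r ⊕ Fin s) (Fin r ⊕ Fin s) ℂ) +
        (Dmat N r s hr hs da db * (Umat N r s)ᴴ) *
          (x • ((Hlin N (Ymat N a b U) w - x • 1)⁻¹ * Umat N r s))
      = Dmat N r s hr hs da db *
          ((Dmat N r s hr hs da db)⁻¹ +
            x • ((Umat N r s)ᴴ * (Hlin N (Ymat N a b U) w - x • 1)⁻¹ * Umat N r s)) := by
    rw [Matrix.mul_add, hDD]
    simp only [Matrix.mul_smul, Matrix.mul_assoc]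
  rw [h1, det_one_add_mul_comm, h2, det_mul]
  ring
end
end

section
/- Let x ∈ ℂ with x ≠ 0, and suppose x is not an eigenvalue of Q₁. Then x is an eigenvalue of Q̂₁ if and only if det(𝒟⁻¹ + x·𝐔ᴴ·G(x)·𝐔) = 0. -/
open Matrix

noncomputable section

/-! ### Auxiliary lemmas -/

lemma det_hlin (N : ℕ) (Y : Matrix (Fin N) (Fin N) ℂ) (x w : ℂ) (hx : x ≠ 0)
    (hw : w ^ 2 = x) :
    (Hlin N Y w - x • (1 : Matrix (Fin N ⊕ Fin N) (Fin N ⊕ Fin N) ℂ)).det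
      = (-x) ^ N * (Yᴴ * Y - x • 1).det := by
  have hblock : Hlin N Y w - x • (1 : Matrix (Fin N ⊕ Fin N) (Fin N ⊕ Fin N) ℂ)
      = fromBlocks ((-x) • 1) (w • Y) (w • Yᴴ) ((-x) • 1) := by
    rw [Hlin, ← fromBlocks_one, fromBlocks_smul, sub_eq_add_neg, fromBlocks_neg,
      fromBlocks_add]
    congr 1 <;> simp [neg_smul]
  letI : Invertible ((-x) • (1 : Matrix (Fin N) (Fin N) ℂ)) :=
    ⟨(-x)⁻¹ • 1, by
      rw [smul_mul_smul_comm, one_mul, inv_mul_cancel₀ (neg_ne_zero.mpr hx), one_smul], by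
      rw [smul_mul_smul_comm, one_mul, mul_inv_cancel₀ (neg_ne_zero.mpr hx), one_smul]⟩
  rw [hblock, det_fromBlocks₁₁]
  have h1 : ⅟((-x) • (1 : Matrix (Fin N) (Fin N) ℂ)) = (-x)⁻¹ • 1 := rfl
  have h2 : (w • Yᴴ) * ((-x)⁻¹ • (1 : Matrix (Fin N) (Fin N) ℂ)) * (w • Y)
      = -(Yᴴ * Y) := by
    rw [smul_mul_smul_comm, mul_one, smul_mul_smul_comm]
    have : w * (-x)⁻¹ * w = -1 := by
      have hww : w * (-x)⁻¹ * w = w ^ 2 * (-x)⁻¹ := by ring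
      rw [hww, hw]
      field_simp
    rw [this, neg_one_smul]
  rw [h1, h2, sub_neg_eq_add, det_smul, det_one, mul_one, Fintype.card_fin]
  congr 1
  rw [sub_eq_add_neg, add_comm, neg_smul]

lemma det_mul_sub_comm {N : ℕ} (A B : Matrix (Fin N) (Fin N) ℂ) (x : ℂ) (hx : x ≠ 0) :
    (A * B - x • 1).det = (B * A - x • 1).det := by
  have key : ∀ C D : Matrix (Fin N) (Fin N) ℂ,
      C * D - x • 1 = (-x) • (1 + ((-x)⁻¹ • C) * D) := by
    intro C D
    rw [smul_add, smul_mul_assoc, smul_smul, mul_inv_cancel₀ (neg_ne_zero.mpr hx),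
      one_smul, neg_smul]
    abel
  rw [key A B, key B A, det_smul, det_smul,
    det_one_add_mul_comm ((-x)⁻¹ • A) B, Matrix.mul_smul, ← Matrix.smul_mul]

def pvec (N r : ℕ) (d : Fin N → ℝ) : Fin N → ℂ :=
  fun i => ((Real.sqrt (1 + if (i : ℕ) < r then d i else 0) : ℝ) : ℂ)

lemma sqrtDiag_hat (N r : ℕ) (a d : Fin N → ℝ) (ha : ∀ i, 0 < a i) :
    sqrtDiag N (hatEntries N r a d) = Matrix.diagonal (pvec N r d) * sqrtDiag N a := by
  rw [sqrtDiag, sqrtDiag, diagonal_mul_diagonal]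
  refine congrArg Matrix.diagonal (funext fun i => ?_)
  by_cases h : (i : ℕ) < r
  · simp only [Pi.mul_apply, pvec, hatEntries, if_pos h]
    rw [Real.sqrt_mul (ha i).le, ← Complex.ofReal_mul, mul_comm]
  · simp only [Pi.mul_apply, pvec, hatEntries, if_neg h]
    simp

lemma Ymat_hat (N r s : ℕ) (a b da db : Fin N → ℝ) (ha : ∀ i, 0 < a i)
    (hb : ∀ i, 0 < b i) (U : Matrix (Fin N) (Fin N) ℂ) :
    Ymat N (hatEntries N r a da) (hatEntries N s b db) U
      = Matrix.diagonal (pvec N r da) * Ymat N a b U * Matrix.diagonal (pvec N s db) := by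
  rw [Ymat, Ymat, sqrtDiag_hat N r a da ha, sqrtDiag_hat N s b db hb]
  have : sqrtDiag N b * Matrix.diagonal (pvec N s db)
      = Matrix.diagonal (pvec N s db) * sqrtDiag N b := by
    rw [sqrtDiag, diagonal_mul_diagonal, diagonal_mul_diagonal]
    exact congrArg Matrix.diagonal (funext fun i => mul_comm _ _)
  rw [Matrix.mul_assoc, Matrix.mul_assoc, ← this]
  noncomm_ring

lemma pvec_conj (N r : ℕ) (d : Fin N → ℝ) : star ∘ pvec N r d = pvec N r d := by
  funext i
  simp [pvec, Complex.star_def, Complex.conj_ofReal]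

lemma diag_pvec_conjT (N r : ℕ) (d : Fin N → ℝ) :
    (Matrix.diagonal (pvec N r d))ᴴ = Matrix.diagonal (pvec N r d) := by
  rw [diagonal_conjTranspose]
  exact congrArg Matrix.diagonal (pvec_conj N r d)

lemma Hlin_conj (N r s : ℕ) (da db : Fin N → ℝ) (Y : Matrix (Fin N) (Fin N) ℂ) (w : ℂ) :
    Hlin N (Matrix.diagonal (pvec N r da) * Y * Matrix.diagonal (pvec N s db)) w
      = Matrix.diagonal (Sum.elim (pvec N r da) (pvec N s db)) * Hlin N Y w *
        Matrix.diagonal (Sum.elim (pvec N r da) (pvec N s db)) := by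
  rw [← fromBlocks_diagonal, Hlin, Hlin, fromBlocks_multiply, fromBlocks_multiply]
  have hct : (Matrix.diagonal (pvec N r da) * Y * Matrix.diagonal (pvec N s db))ᴴ
      = Matrix.diagonal (pvec N s db) * Yᴴ * Matrix.diagonal (pvec N r da) := by
    rw [conjTranspose_mul, conjTranspose_mul, diag_pvec_conjT, diag_pvec_conjT,
      Matrix.mul_assoc]
  rw [hct]
  congr 1 <;> simp [Matrix.mul_smul, Matrix.smul_mul, Matrix.mul_assoc]

lemma indicator_block (N r : ℕ) (f : Fin r → ℂ) :
    (Matrix.of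
        fun (i : Fin N) (i' : Fin r) => if (i : ℕ) = (i' : ℕ) then (1 : ℂ) else 0) * Matrix.diagonal f *
      (Matrix.of
        fun (i : Fin N) (i' : Fin r) => if (i : ℕ) = (i' : ℕ) then (1 : ℂ) else 0)ᴴ
      = Matrix.diagonal (fun p : Fin N => if h : (p : ℕ) < r then f ⟨p, h⟩ else 0) := by
  ext p q
  rw [Matrix.mul_apply]
  simp only [Matrix.mul_diagonal, Matrix.conjTranspose_apply, Matrix.of_apply]
  by_cases h : (p : ℕ) < r
  · rw [Finset.sum_eq_single (⟨(p : ℕ), h⟩ : Fin r)]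
    · simp only [if_pos rfl]
      by_cases hq : (q : ℕ) = (p : ℕ)
      · have hpq : p = q := Fin.ext hq.symm
        simp [hpq, Matrix.diagonal_apply_eq, dif_pos h, hq]
      · have hpq : p ≠ q := fun e => hq (by rw [e])
        simp [Matrix.diagonal_apply_ne _ hpq, hq]
    · intro t _ ht
      have : (p : ℕ) ≠ (t : ℕ) := by
        intro e; exact ht (Fin.ext (by simp [← e]))
      simp [this]
    · intro habs; exact absurd (Finset.mem_univ _) habs
  · rw [Finset.sum_eq_zero, Matrix.diagonal_apply]
    · by_cases hpq : p = q
      · subst hpq; simp [dif_neg h]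
      · simp [hpq]
    · intro t _
      have : (p : ℕ) ≠ (t : ℕ) := by
        intro e; exact h (e ▸ t.isLt)
      simp [this]

lemma sqrt_cancel (e : ℝ) (he : 0 ≤ e) :
    ((Real.sqrt (1 + e) : ℝ) : ℂ) * ((1 : ℂ) - ((e / (1 + e) : ℝ) : ℂ)) *
      ((Real.sqrt (1 + e) : ℝ) : ℂ) = 1 := by
  have h1 : (0 : ℝ) < 1 + e := by linarith
  have h2 : (1 : ℝ) - e / (1 + e) = (1 + e)⁻¹ := by field_simp; ring
  have h3 : ((1 : ℂ) - ((e / (1 + e) : ℝ) : ℂ)) = (((1 + e)⁻¹ : ℝ) : ℂ) := by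
    rw [← h2]; push_cast; ring
  rw [h3, ← Complex.ofReal_mul, ← Complex.ofReal_mul]
  have h4 : Real.sqrt (1 + e) * (1 + e)⁻¹ * Real.sqrt (1 + e) = 1 := by
    rw [mul_comm (Real.sqrt (1 + e)) (1 + e)⁻¹, mul_assoc, Real.mul_self_sqrt h1.le,
      inv_mul_cancel₀ h1.ne']
  rw [h4, Complex.ofReal_one]

def Kvec (N r s : ℕ) (da db : Fin N → ℝ) : Fin N ⊕ Fin N → ℂ :=
  Sum.elim
    (fun p : Fin N => if _ : (p : ℕ) < r then ((da p / (1 + da p) : ℝ) : ℂ) else 0)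
    (fun p : Fin N => if _ : (p : ℕ) < s then ((db p / (1 + db p) : ℝ) : ℂ) else 0)

lemma Umat_D_Umat (N r s : ℕ) (hr : r ≤ N) (hs : s ≤ N) (da db : Fin N → ℝ) :
    Umat N r s * Dmat N r s hr hs da db * (Umat N r s)ᴴ
      = Matrix.diagonal (Kvec N r s da db) := by
  rw [show Umat N r s = fromBlocks (Matrix.of fun (i : Fin N) (i' : Fin r) =>
      if (i : ℕ) = (i' : ℕ) then (1 : ℂ) else 0) 0 0 (Matrix.of fun (j : Fin N) (j' : Fin s) =>
      if (j : ℕ) = (j' : ℕ) then (1 : ℂ) else 0) from rfl, Dmat, ← fromBlocks_diagonal, fromBlocks_conjTranspose, fromBlocks_multiply,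
    fromBlocks_multiply]
  simp only [Matrix.mul_zero, Matrix.zero_mul, add_zero, zero_add, conjTranspose_zero,
    Matrix.mul_zero, Matrix.zero_mul]
  rw [indicator_block, indicator_block, fromBlocks_diagonal]
  rfl

lemma PKP (N r s : ℕ) (da db : Fin N → ℝ)
    (hda : ∀ i : Fin N, (i : ℕ) < r → 0 < da i)
    (hdb : ∀ j : Fin N, (j : ℕ) < s → 0 < db j) :
    Matrix.diagonal (Sum.elim (pvec N r da) (pvec N s db)) *
      ((1 : Matrix (Fin N ⊕ Fin N) (Fin N ⊕ Fin N) ℂ) -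
        Matrix.diagonal (Kvec N r s da db)) *
      Matrix.diagonal (Sum.elim (pvec N r da) (pvec N s db)) = 1 := by
  rw [← Matrix.diagonal_one, Matrix.diagonal_sub, diagonal_mul_diagonal,
    diagonal_mul_diagonal]
  refine congrArg Matrix.diagonal (funext fun i => ?_)
  cases i with
  | inl p =>
    simp only [Pi.mul_apply, Pi.sub_apply, Pi.one_apply, Sum.elim_inl, pvec, Kvec]
    by_cases h : (p : ℕ) < r
    · rw [if_pos h, dif_pos h]
      exact sqrt_cancel (da p) (hda p h).le
    · rw [if_neg h, dif_neg h]
      simp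
  | inr p =>
    simp only [Pi.mul_apply, Pi.sub_apply, Pi.one_apply, Sum.elim_inr, pvec, Kvec]
    by_cases h : (p : ℕ) < s
    · rw [if_pos h, dif_pos h]
      exact sqrt_cancel (db p) (hdb p h).le
    · rw [if_neg h, dif_neg h]
      simp


/-- If `x ≠ 0` is not an eigenvalue of `Q₁`, then `x` is an eigenvalue
of `Q̂₁` if and only if `det(𝒟⁻¹ + x·𝐔ᴴ·G(x)·𝐔) = 0`. -/
theorem spiked_eigenvalue_master_equation (N r s : ℕ)
    (hN : 0 < N) (hrpos : 0 < r) (hspos : 0 < s) (hr : r ≤ N) (hs : s ≤ N)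
    (a b da db : Fin N → ℝ)
    (ha : ∀ i, 0 < a i) (hb : ∀ i, 0 < b i)
    (hda : ∀ i : Fin N, (i : ℕ) < r → 0 < da i)
    (hdb : ∀ j : Fin N, (j : ℕ) < s → 0 < db j)
    (U : Matrix (Fin N) (Fin N) ℂ) (hU : U ∈ Matrix.unitaryGroup (Fin N) ℂ)
    (x w : ℂ) (hx : x ≠ 0) (hw : w ^ 2 = x)
    (hev : ∀ v : Fin N → ℂ,
      (Ymat N a b U * (Ymat N a b U)ᴴ) *ᵥ v = x • v → v = 0) :
    (∃ v : Fin N → ℂ, v ≠ 0 ∧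
        (Ymat N (hatEntries N r a da) (hatEntries N s b db) U *
          (Ymat N (hatEntries N r a da) (hatEntries N s b db) U)ᴴ) *ᵥ v = x • v) ↔
      ((Dmat N r s hr hs da db)⁻¹ +
        x • ((Umat N r s)ᴴ *
          (Hlin N (Ymat N a b U) w -
            x • (1 : Matrix (Fin N ⊕ Fin N) (Fin N ⊕ Fin N) ℂ))⁻¹ *
          Umat N r s)).det = 0 := by
  set Y := Ymat N a b U with hY
  set Yh := Ymat N (hatEntries N r a da) (hatEntries N s b db) U with hYh
  set UU := Umat N r s with hUU
  set DD := Dmat N r s hr hs da db with hDD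
  set Pd := Matrix.diagonal (Sum.elim (pvec N r da) (pvec N s db)) with hPdd
  set M := Hlin N Y w - x • (1 : Matrix (Fin N ⊕ Fin N) (Fin N ⊕ Fin N) ℂ) with hM
  set T := DD⁻¹ + x • (UUᴴ * M⁻¹ * UU) with hT
  -- nonzero determinants
  have hQ1 : (Y * Yᴴ - x • 1).det ≠ 0 := by
    intro h0
    obtain ⟨v, hv, hveq⟩ := Matrix.exists_mulVec_eq_zero_iff.mpr h0
    apply hv
    apply hev v
    rw [Matrix.sub_mulVec, Matrix.smul_mulVec, Matrix.one_mulVec, sub_eq_zero] at hveq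
    exact hveq
  have hMdet : M.det ≠ 0 := by
    rw [hM, det_hlin N Y x w hx hw]
    exact mul_ne_zero (pow_ne_zero _ (neg_ne_zero.mpr hx))
      (by rw [det_mul_sub_comm Yᴴ Y x hx]; exact hQ1)
  have hDDdet : DD.det ≠ 0 := by
    rw [hDD, Dmat, Matrix.det_diagonal]
    rw [Finset.prod_ne_zero_iff]
    intro i _
    cases i with
    | inl p =>
      have h1 : 0 < da (Fin.castLE hr p) := hda _ (by simpa using p.isLt)
      simp only [Sum.elim_inl, ne_eq, Complex.ofReal_eq_zero]
      positivity
    | inr p =>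
      have h1 : 0 < db (Fin.castLE hs p) := hdb _ (by simpa using p.isLt)
      simp only [Sum.elim_inr, ne_eq, Complex.ofReal_eq_zero]
      positivity
  have hPdet : Pd.det ≠ 0 := by
    rw [hPdd, Matrix.det_diagonal, Finset.prod_ne_zero_iff]
    intro i _
    have key : ∀ (k : ℕ) (d : Fin N → ℝ) (p : Fin N), pvec N k d p ≠ 0 → True := fun _ _ _ _ => trivial
    cases i with
    | inl p =>
      simp only [Sum.elim_inl, pvec, ne_eq, Complex.ofReal_eq_zero]
      intro h0
      have h1 : (0:ℝ) < 1 + if (p : ℕ) < r then da p else 0 := by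
        by_cases h : (p : ℕ) < r
        · have := hda p h; rw [if_pos h]; linarith
        · rw [if_neg h]; norm_num
      exact absurd h0 (Real.sqrt_ne_zero'.mpr h1).elim
    | inr p =>
      simp only [Sum.elim_inr, pvec, ne_eq, Complex.ofReal_eq_zero]
      intro h0
      have h1 : (0:ℝ) < 1 + if (p : ℕ) < s then db p else 0 := by
        by_cases h : (p : ℕ) < s
        · have := hdb p h; rw [if_pos h]; linarith
        · rw [if_neg h]; norm_num
      exact absurd h0 (Real.sqrt_ne_zero'.mpr h1).elim
  have hMinv : M * M⁻¹ = 1 := Matrix.mul_nonsing_inv M (isUnit_iff_ne_zero.mpr hMdet)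
  have hDinv : DD⁻¹ * DD = 1 := Matrix.nonsing_inv_mul DD (isUnit_iff_ne_zero.mpr hDDdet)
  have hK : UU * DD * UUᴴ = Matrix.diagonal (Kvec N r s da db) :=
    Umat_D_Umat N r s hr hs da db
  have hPKP := PKP N r s da db hda hdb
  -- the conjugation identity
  have hMh : Hlin N Yh w - x • (1 : Matrix (Fin N ⊕ Fin N) (Fin N ⊕ Fin N) ℂ)
      = Pd * (M + x • (UU * DD * UUᴴ)) * Pd := by
    rw [hYh, Ymat_hat N r s a b da db ha hb U, Hlin_conj, hK, ← hPdd, ← hY]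
    have expand : Pd * (M + x • Matrix.diagonal (Kvec N r s da db)) * Pd
        = Pd * Hlin N Y w * Pd -
          x • (Pd * ((1 : Matrix (Fin N ⊕ Fin N) (Fin N ⊕ Fin N) ℂ) -
            Matrix.diagonal (Kvec N r s da db)) * Pd) := by
      rw [hM]
      simp only [Matrix.add_mul, Matrix.mul_add, Matrix.sub_mul, Matrix.mul_sub,
        Matrix.smul_mul, Matrix.mul_smul, Matrix.mul_one, Matrix.one_mul, smul_sub]
      abel
    rw [expand, hPKP]
  -- factorization of the determinant
  have hsplit : M + x • (UU * DD * UUᴴ) = M * (1 + (x • (M⁻¹ * UU * DD)) * UUᴴ) := by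
    simp only [Matrix.mul_add, Matrix.mul_one, Matrix.smul_mul, Matrix.mul_smul,
      ← Matrix.mul_assoc, hMinv, Matrix.one_mul]
  have hform : (1 : Matrix (Fin r ⊕ Fin s) (Fin r ⊕ Fin s) ℂ)
        + UUᴴ * (x • (M⁻¹ * UU * DD)) = T * DD := by
    rw [hT]
    simp only [Matrix.add_mul, Matrix.smul_mul, Matrix.mul_smul, hDinv,
      ← Matrix.mul_assoc]
  have hfac : (Hlin N Yh w - x • (1 : Matrix (Fin N ⊕ Fin N) (Fin N ⊕ Fin N) ℂ)).det
      = Pd.det * (M.det * (T.det * DD.det)) * Pd.det := by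
    rw [hMh, det_mul, det_mul, hsplit, det_mul, det_one_add_mul_comm, hform, det_mul]
  -- chain of equivalences
  have heq : (-x) ^ N * (Yhᴴ * Yh - x • 1).det
      = (Pd.det * Pd.det * M.det * DD.det) * T.det := by
    rw [← det_hlin N Yh x w hx hw, hfac]; ring
  have lhs_iff : (∃ v : Fin N → ℂ, v ≠ 0 ∧ (Yh * Yhᴴ) *ᵥ v = x • v)
      ↔ (Yh * Yhᴴ - x • 1).det = 0 := by
    rw [← Matrix.exists_mulVec_eq_zero_iff]
    constructor
    · rintro ⟨v, hv, hveq⟩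
      exact ⟨v, hv, by
        rw [Matrix.sub_mulVec, Matrix.smul_mulVec, Matrix.one_mulVec, hveq, sub_self]⟩
    · rintro ⟨v, hv, hveq⟩
      refine ⟨v, hv, ?_⟩
      rw [Matrix.sub_mulVec, Matrix.smul_mulVec, Matrix.one_mulVec, sub_eq_zero] at hveq
      exact hveq
  rw [lhs_iff, det_mul_sub_comm Yh Yhᴴ x hx]
  have hc : (Pd.det * Pd.det * M.det * DD.det) ≠ 0 :=
    mul_ne_zero (mul_ne_zero (mul_ne_zero hPdet hPdet) hMdet) hDDdet
  have hxN : (-x) ^ N ≠ 0 := pow_ne_zero _ (neg_ne_zero.mpr hx)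
  constructor
  · intro h0
    have := heq
    rw [h0, mul_zero] at this
    rcases mul_eq_zero.mp this.symm with h | h
    · exact absurd h hc
    · exact h
  · intro h0
    have := heq
    rw [h0, mul_zero] at this
    rcases mul_eq_zero.mp this with h | h
    · exact absurd h hxN
    · exact h
end
end
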